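/- Let B be a σ-complete Boolean algebra and ν a continuous submeasure on B. Let A ∈ B and for each n ≥ 1 let C_n be a countable subset of B such that A is below the least upper bound of C_n. Then for each η > 0 there exists A' ∈ B with A' ≤ A and ν(A \ A') ≤ η such that for each n, A' is finitely covered by C_n, i.e., A' ≤ c_1 ∪ ... ∪ c_k for some finite subset {c_1,...,c_k} of C_n. -/
import Mathlib


open Filter Topology

namespace Maharam

variable {B : Type*} [BooleanAlgebra B]

/-- `B` is σ-complete: every countable subset has a least upper bound. -/
def SigmaComplete (B : Type*) [BooleanAlgebra B] : Prop :=
  ∀ s : Set B, s.Countable → ∃ a, IsLUB s a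

/-- `ν` is a submeasure on the Boolean algebra `B`. -/
def BASubmeasure (ν : B → ℝ) : Prop :=
  ν ⊥ = 0 ∧ (∀ a, 0 ≤ ν a) ∧ (∀ a b : B, a ≤ b → ν a ≤ ν b) ∧
    ∀ a b : B, ν (a ⊔ b) ≤ ν a + ν b

/-- `ν` is continuous: `ν (A n) → 0` for every decreasing sequence with
greatest lower bound `⊥`. -/
def BAContinuous (ν : B → ℝ) : Prop :=
  ∀ A : ℕ → B, Antitone A → IsGLB (Set.range A) ⊥ →
    Tendsto (fun n => ν (A n)) atTop (𝓝 0)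

/-- If `ν` is a continuous submeasure on a σ-complete Boolean algebra, `A ∈ B`
and `(C_n)` are countable subsets of `B` with `A` below the least upper bound
of each `C_n`, then for every `η > 0` there is `A' ≤ A` with `ν (A \ A') ≤ η`
such that each `A'` is finitely covered by every `C_n`. -/
private lemma nu_finset_sup_le {B : Type*} [BooleanAlgebra B] {ν : B → ℝ}
    (hbot : ν ⊥ = 0) (hadd : ∀ a b : B, ν (a ⊔ b) ≤ ν a + ν b)
    (g : ℕ → B) (s : Finset ℕ) :
    ν (s.sup g) ≤ ∑ i ∈ s, ν (g i) := by
  classical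
  induction s using Finset.cons_induction with
  | empty => simp [hbot]
  | cons a s ha ih =>
    rw [Finset.sup_cons, Finset.sum_cons]
    exact (hadd _ _).trans (by linarith)

private lemma le_bot_of_le_compl_self {B : Type*} [BooleanAlgebra B] {x : B}
    (h : x ≤ xᶜ) : x ≤ ⊥ := by
  have : x ≤ x ⊓ xᶜ := le_inf le_rfl h
  simpa using this

theorem exists_finitely_covered_approximation
    (hσ : SigmaComplete B) (ν : B → ℝ)
    (hsub : BASubmeasure ν) (hcont : BAContinuous ν)
    (A : B) (C : ℕ → Set B) (hcnt : ∀ n, (C n).Countable)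
    (hcov : ∀ n, ∃ b, IsLUB (C n) b ∧ A ≤ b)
    (η : ℝ) (hη : 0 < η) :
    ∃ A' : B, A' ≤ A ∧ ν (A \ A') ≤ η ∧
      ∀ n, ∃ t : Finset B, ↑t ⊆ C n ∧ A' ≤ t.sup id := by
  classical
  obtain ⟨hbot, hpos, hmono, hadd⟩ := hsub
  by_cases hA : A = ⊥
  · refine ⟨⊥, bot_le, ?_, fun n => ⟨∅, by simp, by simp⟩⟩
    simp [hA, hbot, hη.le]
  -- every C n is nonempty
  have hne : ∀ n, (C n).Nonempty := by
    intro n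
    by_contra h
    rw [Set.not_nonempty_iff_eq_empty] at h
    obtain ⟨b, hb, hAb⟩ := hcov n
    rw [h] at hb
    have hbb : b = ⊥ := hb.unique isLUB_empty
    exact hA (le_bot_iff.mp (hbb ▸ hAb))
  choose f hf using fun n => (hcnt n).exists_eq_range (hne n)
  set F : ℕ → ℕ → B := fun n k => (Finset.range (k + 1)).sup (f n) with hF
  set D : ℕ → ℕ → B := fun n k => A \ F n k with hD
  have hDanti : ∀ n, Antitone (D n) := by
    intro n i j hij
    have : F n i ≤ F n j := Finset.sup_mono (by
      intro x hx
      simp only [Finset.mem_range] at hx ⊢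
      omega)
    exact sdiff_le_sdiff_left this
  have hDglb : ∀ n, IsGLB (Set.range (D n)) ⊥ := by
    intro n
    refine ⟨fun y _ => bot_le, fun x hx => ?_⟩
    have hxk : ∀ k, x ≤ D n k := fun k => hx ⟨k, rfl⟩
    obtain ⟨b, hb, hAb⟩ := hcov n
    have hbx : b ≤ xᶜ := by
      apply hb.2
      intro c hc
      rw [hf n] at hc
      obtain ⟨i, rfl⟩ := hc
      have h1 : x ≤ (F n i)ᶜ := by
        have := hxk i
        rw [hD] at this
        simp only [sdiff_eq] at this
        exact this.trans inf_le_right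
      have h2 : F n i ≤ xᶜ := le_compl_iff_le_compl.mp h1
      exact le_trans (Finset.le_sup (Finset.mem_range.mpr (Nat.lt_succ_self i))) h2
    have hxA : x ≤ A := (hxk 0).trans sdiff_le
    exact le_bot_of_le_compl_self (hxA.trans (hAb.trans hbx))
  have hexk : ∀ n, ∃ k, ν (D n k) ≤ η / 2 ^ (n + 1) := by
    intro n
    have ht := hcont (D n) (hDanti n) (hDglb n)
    have hpos' : (0 : ℝ) < η / 2 ^ (n + 1) := by positivity
    obtain ⟨k, hk⟩ := (ht.eventually_lt_const hpos').exists
    exact ⟨k, hk.le⟩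
  choose k hk using hexk
  set Dn : ℕ → B := fun n => D n (k n) with hDn
  obtain ⟨S, hS⟩ := hσ (Set.range Dn) (Set.countable_range _)
  refine ⟨A \ S, sdiff_le, ?_, ?_⟩
  · -- ν (A \ (A \ S)) ≤ η
    rw [sdiff_sdiff_right_self]
    refine le_trans (hmono _ _ inf_le_right) ?_
    -- show ν S ≤ η
    set G : ℕ → B := fun m => (Finset.range (m + 1)).sup Dn with hG
    have hGS : ∀ m, G m ≤ S := by
      intro m
      apply Finset.sup_le
      intro i _
      exact hS.1 ⟨i, rfl⟩
    set E : ℕ → B := fun m => S \ G m with hE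
    have hEanti : Antitone E := by
      intro i j hij
      refine sdiff_le_sdiff_left (Finset.sup_mono ?_)
      intro x hx
      simp only [Finset.mem_range] at hx ⊢
      omega
    have hEglb : IsGLB (Set.range E) ⊥ := by
      refine ⟨fun y _ => bot_le, fun x hx => ?_⟩
      have hxm : ∀ m, x ≤ E m := fun m => hx ⟨m, rfl⟩
      have hSx : S ≤ xᶜ := by
        apply hS.2
        intro c hc
        obtain ⟨i, rfl⟩ := hc
        have h1 : x ≤ (G i)ᶜ := by
          have := hxm i
          rw [hE] at this
          simp only [sdiff_eq] at this
          exact this.trans inf_le_right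
        have h2 : G i ≤ xᶜ := le_compl_iff_le_compl.mp h1
        exact le_trans (Finset.le_sup (Finset.mem_range.mpr (Nat.lt_succ_self i))) h2
      have hxS : x ≤ S := (hxm 0).trans sdiff_le
      exact le_bot_of_le_compl_self (hxS.trans hSx)
    have htE := hcont E hEanti hEglb
    have hbound : ∀ m, ν S ≤ η + ν (E m) := by
      intro m
      have hsplit : S = E m ⊔ G m := (sdiff_sup_cancel (hGS m)).symm
      have h1 : ν S ≤ ν (E m) + ν (G m) := by
        rw [hsplit]; exact hadd _ _
      have h2 : ν (G m) ≤ ∑ i ∈ Finset.range (m + 1), ν (Dn i) :=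
        nu_finset_sup_le hbot hadd Dn _
      have h3 : ∑ i ∈ Finset.range (m + 1), ν (Dn i) ≤
          ∑ i ∈ Finset.range (m + 1), η / 2 ^ (i + 1) :=
        Finset.sum_le_sum fun i _ => hk i
      have h4 : ∑ i ∈ Finset.range (m + 1), η / 2 ^ (i + 1) ≤ η := by
        have hgeom : ∑ i ∈ Finset.range (m + 1), ((1:ℝ) / 2) ^ i ≤ 2 :=
          sum_geometric_two_le _
        have : ∑ i ∈ Finset.range (m + 1), η / 2 ^ (i + 1)
            = (η / 2) * ∑ i ∈ Finset.range (m + 1), ((1:ℝ) / 2) ^ i := by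
          rw [Finset.mul_sum]
          apply Finset.sum_congr rfl
          intro i _
          rw [div_pow, one_pow, pow_succ]
          rw [div_mul_eq_div_div]
          ring
        rw [this]
        calc (η / 2) * ∑ i ∈ Finset.range (m + 1), ((1:ℝ) / 2) ^ i
            ≤ (η / 2) * 2 := by
              apply mul_le_mul_of_nonneg_left hgeom (by positivity)
          _ = η := by ring
      linarith
    have hlim : Tendsto (fun m => η + ν (E m)) atTop (𝓝 (η + 0)) :=
      tendsto_const_nhds.add htE
    have := ge_of_tendsto' hlim hbound
    linarith
  · -- finite covers
    intro n
    refine ⟨(Finset.range (k n + 1)).image (f n), ?_, ?_⟩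
    · intro c hc
      simp only [Finset.coe_image, Set.mem_image, Finset.mem_coe] at hc
      obtain ⟨i, _, rfl⟩ := hc
      rw [hf n]
      exact ⟨i, rfl⟩
    · have hsup : ((Finset.range (k n + 1)).image (f n)).sup id = F n (k n) := by
        rw [Finset.sup_image]
        rfl
      rw [hsup]
      have h1 : Dn n ≤ S := hS.1 ⟨n, rfl⟩
      have h2 : A \ S ≤ A \ Dn n := sdiff_le_sdiff_left h1
      have h3 : A \ Dn n ≤ F n (k n) := by
        rw [hDn, hD, sdiff_sdiff_right_self]
        exact inf_le_right
      exact h2.trans h3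

end Maharam
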